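/- arXiv:1608.03810 — 4 statements merged into one kernel-verified Lean document; each statement's English description precedes it below -/
import Mathlib

section
/- For all nonzero integers b, c and all rational T ≠ 0 such that the denominator D = T^4 + 2bT^3 + (b^2+6c)T^2 + 2bcT + c^2 is nonzero, the triple (x, y, z) with x = T, y = -4bcT^2/D, and z = (T^8 + 4bT^7 + (10b^2+12c)T^6 + (12b^3+28bc)T^5 + (5b^4+28b^2c+38c^2)T^4 + (12b^3c+28bc^2)T^3 + (10b^2c^2+12c^3)T^2 + 4bc^3T + c^4)/(4bT^2 D) satisfies z^2 = f(x)^2 + f(y)^2, where f(x) = x + b + c/x. -/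
theorem stmt_0 (b c : ℤ) (hb : b ≠ 0) (hc : c ≠ 0) (T : ℚ) (hT : T ≠ 0)
    (hD : T^4 + 2*b*T^3 + (b^2 + 6*c)*T^2 + 2*b*c*T + c^2 ≠ 0) :
    let f : ℚ → ℚ := fun u => u + b + c / u
    let D : ℚ := T^4 + 2*b*T^3 + (b^2 + 6*c)*T^2 + 2*b*c*T + c^2
    let y : ℚ := -4*b*c*T^2 / D
    let z : ℚ := (T^8 + 4*b*T^7 + (10*b^2 + 12*c)*T^6 + (12*b^3 + 28*b*c)*T^5
      + (5*b^4 + 28*b^2*c + 38*c^2)*T^4 + (12*b^3*c + 28*b*c^2)*T^3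
      + (10*b^2*c^2 + 12*c^3)*T^2 + 4*b*c^3*T + c^4) / (4*b*T^2*D)
    z^2 = f T ^ 2 + f y ^ 2 := by
  intro f D y z
  have hb' : (b : ℚ) ≠ 0 := Int.cast_ne_zero.mpr hb
  have hc' : (c : ℚ) ≠ 0 := Int.cast_ne_zero.mpr hc
  have hy : y ≠ 0 := by
    simp only [y]
    exact div_ne_zero (mul_ne_zero (mul_ne_zero (mul_ne_zero (by norm_num) hb') hc') (pow_ne_zero 2 hT)) hD
  have hD' : D ≠ 0 := hD
  have hf : ∀ u : ℚ, u ≠ 0 → f u = (u^2 + b*u + c) / u := by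
    intro u hu; simp only [f]; field_simp
  rw [hf T hT, hf y hy, div_pow, div_pow, div_pow]
  simp only [y, z]
  field_simp
  simp only [D]
  ring
end

section
/- The point Q = (3(r^2−1)(r^6+4r^5+5r^4−8r^3+55r^2+4r−13), 108(r^2+2r−1)(r^2−2r−1)(r^3−r+2)(r^2−1)^2) lies on the elliptic curve V^2 = U^3 + c_1 U + c_2, where c_1 = −27(13r^{12}+8r^{11}−70r^{10}+120r^9+371r^8−400r^7+140r^6+400r^5+371r^4−120r^3−70r^2−8r+13)(r^2−1)^2 and c_2 = 54(r^4+4r^3+18r^2−4r+1)(19r^{12}+8r^{11}−130r^{10}+120r^9+461r^8−400r^7+452r^6+400r^5+461r^4−120r^3−130r^2−8r+19)(r^2−1)^4, for every rational r. -/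
theorem stmt_7 (r : ℚ) :
    let U : ℚ := 3*(r^2 - 1)*(r^6 + 4*r^5 + 5*r^4 - 8*r^3 + 55*r^2 + 4*r - 13)
    let V : ℚ := 108*(r^2 + 2*r - 1)*(r^2 - 2*r - 1)*(r^3 - r + 2)*(r^2 - 1)^2
    let c₁ : ℚ := -27*(13*r^12 + 8*r^11 - 70*r^10 + 120*r^9 + 371*r^8 - 400*r^7
      + 140*r^6 + 400*r^5 + 371*r^4 - 120*r^3 - 70*r^2 - 8*r + 13)*(r^2 - 1)^2
    let c₂ : ℚ := 54*(r^4 + 4*r^3 + 18*r^2 - 4*r + 1)*(19*r^12 + 8*r^11 - 130*r^10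
      + 120*r^9 + 461*r^8 - 400*r^7 + 452*r^6 + 400*r^5 + 461*r^4 - 120*r^3
      - 130*r^2 - 8*r + 19)*(r^2 - 1)^4
    V^2 = U^3 + c₁*U + c₂ := by
  intro U V c₁ c₂; simp only [U,V,c₁,c₂]; ring
end

section
/- For every rational r with r^3 − r + 2 ≠ 0, the point [2]Q on the elliptic curve E(r): V^2 = U^3 + c_1 U + c_2 (doubling of Q = (3(r^2−1)(r^6+4r^5+5r^4−8r^3+55r^2+4r−13), 108(r^2+2r−1)(r^2−2r−1)(r^3−r+2)(r^2−1)^2)) has U-coordinate equal to 3(3r^{16}−20r^{14}+16r^{13}+68r^{12}−64r^{11}−220r^{10}+400r^9+970r^8−896r^7+1268r^6+688r^5+1428r^4−64r^3−516r^2−80r+91)/(2(r^3−r+2))^2. -/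
/-- Doubling formula on `V^2 = U^3 + c₁U + c₂`: the `U`-coordinate of `[2]Q`
is `λ² − 2U` where `λ = (3U² + c₁)/(2V)`. -/
theorem stmt_8 (r : ℚ) (h : r^3 - r + 2 ≠ 0)
    (hV : 108*(r^2 + 2*r - 1)*(r^2 - 2*r - 1)*(r^3 - r + 2)*(r^2 - 1)^2 ≠ 0) :
    let U : ℚ := 3*(r^2 - 1)*(r^6 + 4*r^5 + 5*r^4 - 8*r^3 + 55*r^2 + 4*r - 13)
    let V : ℚ := 108*(r^2 + 2*r - 1)*(r^2 - 2*r - 1)*(r^3 - r + 2)*(r^2 - 1)^2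
    let c₁ : ℚ := -27*(13*r^12 + 8*r^11 - 70*r^10 + 120*r^9 + 371*r^8 - 400*r^7
      + 140*r^6 + 400*r^5 + 371*r^4 - 120*r^3 - 70*r^2 - 8*r + 13)*(r^2 - 1)^2
    let lam : ℚ := (3*U^2 + c₁) / (2*V)
    lam^2 - 2*U = 3*(3*r^16 - 20*r^14 + 16*r^13 + 68*r^12 - 64*r^11 - 220*r^10
      + 400*r^9 + 970*r^8 - 896*r^7 + 1268*r^6 + 688*r^5 + 1428*r^4 - 64*r^3
      - 516*r^2 - 80*r + 91) / (2*(r^3 - r + 2))^2 := by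
  intro U V c₁ lam
  simp only [U, V, c₁, lam]
  have h2V : (2:ℚ)*(108*(r^2 + 2*r - 1)*(r^2 - 2*r - 1)*(r^3 - r + 2)*(r^2 - 1)^2) ≠ 0 := mul_ne_zero two_ne_zero hV
  have h2 : (2*(r^3 - r + 2))^2 ≠ 0 := pow_ne_zero _ (mul_ne_zero two_ne_zero h)
  rw [div_pow, div_sub' (pow_ne_zero _ h2V), div_eq_div_iff (pow_ne_zero _ h2V) h2]
  ring
end

section
/- The discriminant of the quartic p(x) = a_4x^4 + a_3x^3 + a_2x^2 + a_1x + a_0 with a_4 = r^8−4r^6+22r^4−4r^2+1, a_3 = −2b(r^2−2r−1)(r−1)^3(r+1)^3, a_2 = b^2(r^4−8r^3−6r^2+8r+1)(r−1)^2(r+1)^2, a_1 = 4b^3r(r^2−2r−1)(r−1)^2(r+1)^2, a_0 = b^4(r−1)^2(r+1)^2(r^2+1)^2 equals 16(17r^6−26r^5+27r^4+4r^3−5r^2−2r+1)(r^6+2r^5−5r^4−4r^3+27r^2+26r+17)(r^2+1)^4(r^2+2r−1)^4(r^2−2r−1)^4(r^2−1)^6 b^{12}, and this is nonzero for every nonzero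 rational b and every rational r ≠ 0, ±1. -/
/-- The discriminant of a quartic `a₄x⁴ + a₃x³ + a₂x² + a₁x + a₀`
(standard formula). -/
def quarticDisc (a₄ a₃ a₂ a₁ a₀ : ℚ) : ℚ :=
  256*a₄^3*a₀^3 - 192*a₄^2*a₃*a₁*a₀^2 - 128*a₄^2*a₂^2*a₀^2
    + 144*a₄^2*a₂*a₁^2*a₀ - 27*a₄^2*a₁^4 + 144*a₄*a₃^2*a₂*a₀^2
    - 6*a₄*a₃^2*a₁^2*a₀ - 80*a₄*a₃*a₂^2*a₁*a₀ + 18*a₄*a₃*a₂*a₁^3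
    + 16*a₄*a₂^4*a₀ - 4*a₄*a₂^3*a₁^2 - 27*a₃^4*a₀^2 + 18*a₃^3*a₂*a₁*a₀
    - 4*a₃^3*a₁^3 - 4*a₃^2*a₂^3*a₀ + a₃^2*a₂^2*a₁^2

lemma sq_ne_two (q : ℚ) : q^2 ≠ 2 := by
  intro h
  apply irrational_sqrt_two
  refine ⟨|q|, ?_⟩
  have h' : ((q:ℝ))^2 = 2 := by exact_mod_cast h
  rw [← h', Real.sqrt_sq_eq_abs]
  push_cast [abs_eq_abs]
  simp

lemma sext1_pos (r : ℚ) : 0 < 17*r^6 - 26*r^5 + 27*r^4 + 4*r^3 - 5*r^2 - 2*r + 1 := by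
  nlinarith [sq_nonneg (25*r^3 - 36*r^2 - 8*r + 8), sq_nonneg (33*r^3 + 75*r^2 - 40*r),
    sq_nonneg (1145*r^3 - 2369*r^2), sq_nonneg (r^3), sq_nonneg r]

lemma sext2_pos (r : ℚ) : 0 < r^6 + 2*r^5 - 5*r^4 - 4*r^3 + 27*r^2 + 26*r + 17 := by
  nlinarith [sq_nonneg (r^3 + r^2), sq_nonneg (r^2 + r), sq_nonneg (r^2 - 1), sq_nonneg (r+1), sq_nonneg (r^3 + r^2 - 2*r), sq_nonneg (2*r^2 + 3*r), sq_nonneg (r^2 + 2*r), sq_nonneg r]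

theorem stmt_15 (b r : ℚ) :
    let a₄ : ℚ := r^8 - 4*r^6 + 22*r^4 - 4*r^2 + 1
    let a₃ : ℚ := -2*b*(r^2 - 2*r - 1)*(r - 1)^3*(r + 1)^3
    let a₂ : ℚ := b^2*(r^4 - 8*r^3 - 6*r^2 + 8*r + 1)*(r - 1)^2*(r + 1)^2
    let a₁ : ℚ := 4*b^3*r*(r^2 - 2*r - 1)*(r - 1)^2*(r + 1)^2
    let a₀ : ℚ := b^4*(r - 1)^2*(r + 1)^2*(r^2 + 1)^2
    quarticDisc a₄ a₃ a₂ a₁ a₀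
      = 16*(17*r^6 - 26*r^5 + 27*r^4 + 4*r^3 - 5*r^2 - 2*r + 1)
        * (r^6 + 2*r^5 - 5*r^4 - 4*r^3 + 27*r^2 + 26*r + 17)
        * (r^2 + 1)^4 * (r^2 + 2*r - 1)^4 * (r^2 - 2*r - 1)^4 * (r^2 - 1)^6 * b^12
    ∧ (b ≠ 0 → r ≠ 0 → r ≠ 1 → r ≠ -1 → quarticDisc a₄ a₃ a₂ a₁ a₀ ≠ 0) := by
  intro a₄ a₃ a₂ a₁ a₀
  have hid : quarticDisc a₄ a₃ a₂ a₁ a₀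
      = 16*(17*r^6 - 26*r^5 + 27*r^4 + 4*r^3 - 5*r^2 - 2*r + 1)
        * (r^6 + 2*r^5 - 5*r^4 - 4*r^3 + 27*r^2 + 26*r + 17)
        * (r^2 + 1)^4 * (r^2 + 2*r - 1)^4 * (r^2 - 2*r - 1)^4 * (r^2 - 1)^6 * b^12 := by
    simp only [quarticDisc, a₄, a₃, a₂, a₁, a₀]; ring
  refine ⟨hid, fun hb hr h1 hm1 => ?_⟩
  rw [hid]
  have h2 : r^2 + 2*r - 1 ≠ 0 := by
    intro h; exact sq_ne_two (r+1) (by nlinarith)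
  have h3 : r^2 - 2*r - 1 ≠ 0 := by
    intro h; exact sq_ne_two (r-1) (by nlinarith)
  have h4 : r^2 + 1 ≠ 0 := by positivity
  have h5 : r^2 - 1 ≠ 0 := by
    intro h
    rcases mul_eq_zero.mp (show (r-1)*(r+1) = 0 by linarith [h]; ) with h' | h'
    · exact h1 (by linarith)
    · exact hm1 (by linarith)
  have := sext1_pos r
  have := sext2_pos r
  positivity
end
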